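/- Every unital quantum channel on a qubit (a completely positive trace-preserving map on 2×2 complex matrices with N(𝟙) = 𝟙) is a mixed-unitary channel, i.e., can be written as ρ ↦ Σ_m p(m) U_m ρ U_m† for a probability distribution p and unitary matrices U_m. -/

import Mathlib

open Matrix Kronecker Finset
open scoped ComplexConjugate Classical ComplexOrder

noncomputable section

/-- Density matrix (outer product) of a vector. -/
def dmv {n : Type*} (v : n → ℂ) : Matrix n n ℂ :=
  Matrix.of fun i j => v i * conj (v j)

/-- Outer product `|u⟩⟨v|`. -/
def outer {n : Type*} (u v : n → ℂ) : Matrix n n ℂ :=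
  Matrix.of fun i j => u i * conj (v j)

/-- Largest eigenvalue of a (Hermitian) matrix. -/
def maxEig {n : Type*} [Fintype n] [DecidableEq n] (A : Matrix n n ℂ) : ℝ :=
  if h : A.IsHermitian then ⨆ i, h.eigenvalues i else 0

/-- Sum of the `k` largest eigenvalues of a Hermitian matrix. -/
def topSum {n : Type*} [Fintype n] [DecidableEq n] (A : Matrix n n ℂ) (k : ℕ) : ℝ :=
  if h : A.IsHermitian then
    sSup {x : ℝ | ∃ s : Finset n, s.card = k ∧ x = ∑ i ∈ s, h.eigenvalues i}
  else 0

/-- Majorization of Hermitian operators: `A ≺ B` (possibly on different spaces):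
every partial sum of the `k` largest eigenvalues of `A` is at most that of `B`,
and the traces agree. -/
def Maj {m n : Type*} [Fintype m] [DecidableEq m] [Fintype n] [DecidableEq n]
    (A : Matrix m m ℂ) (B : Matrix n n ℂ) : Prop :=
  (∀ k : ℕ, topSum A k ≤ topSum B k) ∧ A.trace = B.trace

/-- Total matrix square root: the positive square root for PSD matrices, `0` otherwise. -/
def msqrt {n : Type*} [Fintype n] [DecidableEq n] (A : Matrix n n ℂ) : Matrix n n ℂ :=
  if h : A.PosSemidef then
    (h.1.eigenvectorUnitary : Matrix n n ℂ) * diagonal (fun i => ((Real.sqrt (h.1.eigenvalues i) : ℝ) : ℂ)) *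
      (star h.1.eigenvectorUnitary : Matrix n n ℂ)
  else 0

/-- Trace norm (sum of singular values). -/
def traceNorm {n : Type*} [Fintype n] [DecidableEq n] (A : Matrix n n ℂ) : ℝ :=
  ((msqrt (Aᴴ * A)).trace).re

/-- Fidelity `F(ρ,σ) = ‖√ρ √σ‖₁`. -/
def fid {n : Type*} [Fintype n] [DecidableEq n] (ρ σ : Matrix n n ℂ) : ℝ :=
  traceNorm (msqrt ρ * msqrt σ)

/-- Purified distance `P(ρ,σ) = √(1 − F²(ρ,σ))`. -/
def pd {n : Type*} [Fintype n] [DecidableEq n] (ρ σ : Matrix n n ℂ) : ℝ :=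
  Real.sqrt (1 - fid ρ σ ^ 2)

/-- Choi matrix of a map on matrices. -/
def choi {m n : Type*} [Fintype m] [DecidableEq m]
    (N : Matrix m m ℂ → Matrix n n ℂ) : Matrix (m × n) (m × n) ℂ :=
  Matrix.of fun p q => N (Matrix.single p.1 q.1 1) p.2 q.2

/-- A map is mixed-unitary if it is a convex combination of unitary conjugations. -/
def IsMixedUnitary {n : Type*} [Fintype n] [DecidableEq n]
    (N : Matrix n n ℂ → Matrix n n ℂ) : Prop :=
  ∃ (m : ℕ) (p : Fin m → ℝ) (U : Fin m → Matrix n n ℂ),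
    (∀ i, 0 ≤ p i) ∧ (∑ i, p i = 1) ∧ (∀ i, U i ∈ Matrix.unitaryGroup n ℂ) ∧
    ∀ ρ, N ρ = ∑ i, (p i : ℂ) • (U i * ρ * (U i)ᴴ)

/-- `id_R ⊗ M` acting blockwise on a matrix on `R × S`. -/
def idTensor {R S T : Type*} (M : Matrix S S ℂ →ₗ[ℂ] Matrix T T ℂ)
    (ρ : Matrix (R × S) (R × S) ℂ) : Matrix (R × T) (R × T) ℂ :=
  Matrix.of fun p q => M (Matrix.of fun s s' => ρ (p.1, s) (q.1, s')) p.2 q.2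

end

set_option maxHeartbeats 4000000

noncomputable section

/-- Unnormalized magic basis: columns are `vec` of `I, iσx, iσy, iσz`. -/
def magicM : Matrix (Fin 2 × Fin 2) (Fin 4) ℂ :=
  Matrix.of fun p j =>
    ![![![(1:ℂ),0,0,Complex.I], ![0,Complex.I,-1,0]],
      ![![0,Complex.I,1,0], ![1,0,0,-Complex.I]]] p.1 p.2 j

lemma magicM_mul_conjTranspose : magicM * magicMᴴ = (2:ℂ) • 1 := by
  ext p q
  obtain ⟨i,k⟩ := p; obtain ⟨j,l⟩ := q
  fin_cases i <;> fin_cases k <;> fin_cases j <;> fin_cases l <;>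
    simp [magicM, Matrix.mul_apply, Fin.sum_univ_four, Matrix.one_apply, Prod.ext_iff] <;> ring_nf

lemma stdB_smul (i j : Fin 2) (c : ℂ) :
    Matrix.single i j c = c • Matrix.single i j 1 := by
  ext a b
  simp [Matrix.single, Matrix.smul_apply, mul_ite]

end

set_option maxHeartbeats 4000000

/-- every unital qubit channel is mixed unitary. -/
theorem stmt6 (N : Matrix (Fin 2) (Fin 2) ℂ →ₗ[ℂ] Matrix (Fin 2) (Fin 2) ℂ)
    (hCP : (choi fun ρ => N ρ).PosSemidef)
    (hTP : ∀ ρ, (N ρ).trace = ρ.trace)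
    (hunital : N 1 = 1) :
    IsMixedUnitary fun ρ => N ρ := by
  classical
  set J : Matrix (Fin 2 × Fin 2) (Fin 2 × Fin 2) ℂ := choi fun ρ => N ρ with hJdef
  have hJH : J.IsHermitian := hCP.1
  have hE : ∀ (i j k l : Fin 2), N (Matrix.single i j 1) k l = J (i,k) (j,l) :=
    fun i j k l => rfl
  -- trace-preservation equations
  have hT : ∀ i j : Fin 2, J (i,0) (j,0) + J (i,1) (j,1) = if i = j then 1 else 0 := by
    intro i j
    have h := hTP (Matrix.single i j 1)
    rw [Matrix.trace_fin_two, Matrix.trace_fin_two] at h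
    calc J (i,0) (j,0) + J (i,1) (j,1)
        = N (Matrix.single i j 1) 0 0 + N (Matrix.single i j 1) 1 1 := by
          rw [hE, hE]
      _ = Matrix.single i j 1 0 0 + Matrix.single i j 1 1 1 := h
      _ = if i = j then 1 else 0 := by
          fin_cases i <;> fin_cases j <;> simp [Matrix.single]
  -- unitality equations
  have hU : ∀ k l : Fin 2, J (0,k) (0,l) + J (1,k) (1,l) = if k = l then 1 else 0 := by
    intro k l
    have h1 : (1 : Matrix (Fin 2) (Fin 2) ℂ)
        = Matrix.single (0:Fin 2) 0 1 + Matrix.single (1:Fin 2) 1 1 := by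
      ext a b
      fin_cases a <;> fin_cases b <;> simp [Matrix.single, Matrix.one_apply]
    have h2 := hunital
    nth_rewrite 1 [h1] at h2
    rw [map_add] at h2
    have h3 : N (Matrix.single (0:Fin 2) 0 1) k l
        + N (Matrix.single (1:Fin 2) 1 1) k l = (1 : Matrix (Fin 2) (Fin 2) ℂ) k l := by
      rw [← Matrix.add_apply, h2]
    rw [hE, hE] at h3
    rw [h3, Matrix.one_apply]
  -- the matrix in the magic basis
  set K : Matrix (Fin 4) (Fin 4) ℂ := magicMᴴ * J * magicM with hKdef
  have hKsym : Kᵀ = K := by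
    have t01 := hT 0 1; have t10 := hT 1 0; have t00 := hT 0 0; have t11 := hT 1 1
    have u01 := hU 0 1; have u10 := hU 1 0; have u00 := hU 0 0; have u11 := hU 1 1
    simp at t01 t10 u01 u10 t00 t11 u00 u11
    rw [hKdef]
    ext a b
    fin_cases a <;> fin_cases b <;>
      simp [magicM, Matrix.mul_apply, Fintype.sum_prod_type, Fin.sum_univ_two, Fin.sum_univ_four]
    all_goals first
      | linear_combination Complex.I*t01 + Complex.I*t10 + Complex.I*u01 + Complex.I*u10
      | linear_combination -(Complex.I*t01 + Complex.I*t10 + Complex.I*u01 + Complex.I*u10)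
      | linear_combination t01 - t10 - u01 + u10
      | linear_combination -(t01 - t10 - u01 + u10)
      | linear_combination t01 - t10 + u01 - u10
      | linear_combination -(t01 - t10 + u01 - u10)
      | linear_combination 2*Complex.I*t11 - 2*Complex.I*u00
      | linear_combination -(2*Complex.I*t11 - 2*Complex.I*u00)
      | linear_combination 2*Complex.I*t00 - 2*Complex.I*u00
      | linear_combination -(2*Complex.I*t00 - 2*Complex.I*u00)
      | linear_combination Complex.I*t01 + Complex.I*t10 - Complex.I*u01 - Complex.I*u10
      | linear_combination -(Complex.I*t01 + Complex.I*t10 - Complex.I*u01 - Complex.I*u10)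
      | linear_combination (Complex.I*Complex.I)*(-t01 + t10 - u01 + u10)
      | linear_combination (Complex.I*Complex.I)*(t01 - t10 + u01 - u10)
      | linear_combination (Complex.I*Complex.I)*(t01 - t10 - u01 + u10)
      | linear_combination (Complex.I*Complex.I)*(-t01 + t10 + u01 - u10)
  have hKH : K.IsHermitian := by
    rw [hKdef]
    exact Matrix.isHermitian_conjTranspose_mul_mul magicM hJH
  have hKPSD : K.PosSemidef := by
    rw [hKdef]
    exact hCP.conjTranspose_mul_mul_same magicM
  have hKba : ∀ a b, K b a = K a b := by
    intro a b
    have h := congrFun (congrFun hKsym a) b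
    simpa [Matrix.transpose_apply] using h
  have hKreal : ∀ a b, ((K a b).re : ℂ) = K a b := by
    intro a b
    have h2 : Kᴴ b a = K b a := by rw [hKH]
    rw [Matrix.conjTranspose_apply] at h2
    rw [hKba a b] at h2
    exact Complex.conj_eq_iff_re.mp h2
  -- the real matrix
  set Kr : Matrix (Fin 4) (Fin 4) ℝ := Matrix.of (fun a b => (K a b).re) with hKrdef
  have hKrmap : K = Kr.map Complex.ofRealHom := by
    ext a b
    rw [Matrix.map_apply]
    exact (hKreal a b).symm
  have hKrH : Kr.IsHermitian := by
    ext a b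
    rw [Matrix.conjTranspose_apply]
    simp [hKrdef, hKba a b]
  have hKrPSD : Kr.PosSemidef := by
    refine Matrix.PosSemidef.of_dotProduct_mulVec_nonneg hKrH (fun x => ?_)
    have h2 := hKPSD.dotProduct_mulVec_nonneg (fun a => (x a : ℂ))
    have h3 : (star (fun a => (x a : ℂ)) ⬝ᵥ K *ᵥ fun a => (x a : ℂ))
        = ((x ⬝ᵥ Kr *ᵥ x : ℝ) : ℂ) := by
      simp only [dotProduct, Matrix.mulVec, hKrmap, Matrix.map_apply, Pi.star_apply,
        Fin.sum_univ_four, Complex.ofRealHom_eq_coe, Complex.star_def, Complex.conj_ofReal]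
      push_cast
      ring
    rw [h3] at h2
    rwa [show (0:ℂ) = ((0:ℝ):ℂ) by norm_num, Complex.real_le_real] at h2
  -- spectral decomposition over ℝ
  have hspec : Kr = (hKrH.eigenvectorUnitary : Matrix (Fin 4) (Fin 4) ℝ)
      * diagonal (RCLike.ofReal ∘ hKrH.eigenvalues) * (star hKrH.eigenvectorUnitary : Matrix (Fin 4) (Fin 4) ℝ) := by
    have := hKrH.spectral_theorem
    rwa [Unitary.conjStarAlgAut_apply] at this
  set V : Matrix (Fin 4) (Fin 4) ℝ := (hKrH.eigenvectorUnitary : Matrix (Fin 4) (Fin 4) ℝ)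
    with hVdef
  set ev : Fin 4 → ℝ := hKrH.eigenvalues with hevdef
  have hev0 : ∀ m, 0 ≤ ev m := fun m => hKrPSD.eigenvalues_nonneg m
  have hV2 : star V * V = 1 := by
    rw [hVdef]
    exact Matrix.mem_unitaryGroup_iff'.mp hKrH.eigenvectorUnitary.2
  -- traces
  have htrJ : J.trace = 2 := by
    have u00 := hU 0 0; have u11 := hU 1 1
    simp at u00 u11
    simp [Matrix.trace, Fintype.sum_prod_type, Fin.sum_univ_two]
    linear_combination u00 + u11
  have htrK : K.trace = 4 := by
    calc K.trace = (magicMᴴ * (J * magicM)).trace := by rw [hKdef, Matrix.mul_assoc]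
      _ = ((J * magicM) * magicMᴴ).trace := Matrix.trace_mul_comm _ _
      _ = (J * (magicM * magicMᴴ)).trace := by rw [Matrix.mul_assoc]
      _ = (J * ((2:ℂ) • 1)).trace := by rw [magicM_mul_conjTranspose]
      _ = (2:ℂ) * J.trace := by
          rw [Matrix.mul_smul, Matrix.mul_one, Matrix.trace_smul, smul_eq_mul]
      _ = 4 := by rw [htrJ]; norm_num
  have htrKr : ∑ m, ev m = 4 := by
    have h1 : Kr.trace = ∑ m, ev m := by
      conv_lhs => rw [hspec]
      rw [Matrix.trace_mul_cycle]
      rw [show star V * V = 1 from hV2]  -- may need massaging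
      rw [Matrix.one_mul, Matrix.trace_diagonal]
      simp [RCLike.ofReal_real_eq_id]
    have h2 : (K.trace) = ((Kr.trace : ℝ) : ℂ) := by
      rw [hKrmap]
      simp [Matrix.trace, Matrix.map_apply, Fin.sum_univ_four]
    rw [htrK] at h2
    have h4 : Kr.trace = 4 := by exact_mod_cast h2.symm
    rw [← h1, h4]
  -- complex form of spectral decomposition
  set Vc : Matrix (Fin 4) (Fin 4) ℂ := V.map Complex.ofRealHom with hVcdef
  have hstarmap : (star V).map (Complex.ofRealHom : ℝ →+* ℂ) = Vcᴴ := by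
    ext a b
    simp [hVcdef, Matrix.map_apply, Matrix.conjTranspose_apply, Complex.conj_ofReal]
  have hKC : K = Vc * Matrix.diagonal (fun m => (ev m : ℂ)) * Vcᴴ := by
    rw [hKrmap]
    conv_lhs => rw [hspec]
    rw [Matrix.map_mul, Matrix.map_mul, hstarmap]
    congr 1
    congr 1
    ext a b
    simp [Matrix.map_apply, Matrix.diagonal, RCLike.ofReal_real_eq_id]
    split <;> simp
  -- reconstruction of J
  set W : Matrix (Fin 2 × Fin 2) (Fin 4) ℂ := magicM * Vc with hWdef
  have h4J : (4:ℂ) • J = W * Matrix.diagonal (fun m => (ev m : ℂ)) * Wᴴ := by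
    have h1 : magicM * K * magicMᴴ = (4:ℂ) • J := by
      rw [hKdef]
      calc magicM * (magicMᴴ * J * magicM) * magicMᴴ
          = (magicM * magicMᴴ) * J * (magicM * magicMᴴ) := by
            simp only [Matrix.mul_assoc]
        _ = ((2:ℂ) • 1) * J * ((2:ℂ) • 1) := by rw [magicM_mul_conjTranspose]
        _ = (4:ℂ) • J := by
            simp only [Matrix.smul_mul, Matrix.mul_smul, Matrix.one_mul, Matrix.mul_one,
              smul_smul]
            norm_num
    rw [← h1, hKC, hWdef]
    rw [Matrix.conjTranspose_mul]
    simp only [Matrix.mul_assoc]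
  have hJpq : ∀ p q : Fin 2 × Fin 2, (4:ℂ) * J p q
      = ∑ m, (ev m : ℂ) * (W p m * conj (W q m)) := by
    intro p q
    have h1 := congrFun (congrFun h4J p) q
    rw [Matrix.smul_apply, smul_eq_mul] at h1
    rw [h1]
    rw [Matrix.mul_apply]
    congr 1
    ext m
    rw [Matrix.mul_diagonal, Matrix.conjTranspose_apply]
    rw [show star (W q m) = conj (W q m) from rfl]
    ring
  -- entry values of W
  have hW00 : ∀ m, W ((0:Fin 2),(0:Fin 2)) m = ((V 0 m : ℝ) : ℂ) + ((V 3 m : ℝ) : ℂ) * Complex.I := by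
    intro m
    rw [hWdef]
    simp [Matrix.mul_apply, Fin.sum_univ_four, magicM, hVcdef, Matrix.map_apply,
      Complex.ofRealHom_eq_coe]
    ring
  have hW01 : ∀ m, W ((0:Fin 2),(1:Fin 2)) m = ((V 1 m : ℝ) : ℂ) * Complex.I - ((V 2 m : ℝ) : ℂ) := by
    intro m
    rw [hWdef]
    simp [Matrix.mul_apply, Fin.sum_univ_four, magicM, hVcdef, Matrix.map_apply,
      Complex.ofRealHom_eq_coe]
    ring
  have hW10 : ∀ m, W ((1:Fin 2),(0:Fin 2)) m = ((V 1 m : ℝ) : ℂ) * Complex.I + ((V 2 m : ℝ) : ℂ) := by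
    intro m
    rw [hWdef]
    simp [Matrix.mul_apply, Fin.sum_univ_four, magicM, hVcdef, Matrix.map_apply,
      Complex.ofRealHom_eq_coe]
    ring
  have hW11 : ∀ m, W ((1:Fin 2),(1:Fin 2)) m = ((V 0 m : ℝ) : ℂ) - ((V 3 m : ℝ) : ℂ) * Complex.I := by
    intro m
    rw [hWdef]
    simp [Matrix.mul_apply, Fin.sum_univ_four, magicM, hVcdef, Matrix.map_apply,
      Complex.ofRealHom_eq_coe]
    ring
  -- columns of V are unit vectors
  have hcol : ∀ m, V 0 m^2 + V 1 m^2 + V 2 m^2 + V 3 m^2 = 1 := by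
    intro m
    have h := congrFun (congrFun hV2 m) m
    simp [Matrix.mul_apply, Fin.sum_univ_four, Matrix.one_apply, Matrix.conjTranspose_apply] at h
    linear_combination h
  refine ⟨4, fun m => ev m / 4,
    fun m => !![((V 0 m : ℝ) : ℂ) + ((V 3 m : ℝ) : ℂ) * Complex.I,
                ((V 2 m : ℝ) : ℂ) + ((V 1 m : ℝ) : ℂ) * Complex.I;
                -((V 2 m : ℝ) : ℂ) + ((V 1 m : ℝ) : ℂ) * Complex.I,
                ((V 0 m : ℝ) : ℂ) - ((V 3 m : ℝ) : ℂ) * Complex.I], ?_, ?_, ?_, ?_⟩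
  · intro m
    exact div_nonneg (hev0 m) (by norm_num)
  · rw [← Finset.sum_div, htrKr]
    norm_num
  · intro m
    rw [Matrix.mem_unitaryGroup_iff]
    have hc : ((V 0 m : ℝ):ℂ)^2 + ((V 1 m : ℝ):ℂ)^2 + ((V 2 m : ℝ):ℂ)^2 + ((V 3 m : ℝ):ℂ)^2 = 1 := by
      exact_mod_cast hcol m
    ext a b
    fin_cases a <;> fin_cases b <;>
      simp [Matrix.mul_apply, Fin.sum_univ_two, Matrix.one_apply, Matrix.conjTranspose_apply,
        Complex.star_def, _root_.map_add, _root_.map_mul, _root_.map_sub, Complex.conj_ofReal, Complex.conj_I]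
    all_goals (try ring)
    all_goals linear_combination hc + (-(((V 3 m : ℝ):ℂ)^2) - ((V 1 m : ℝ):ℂ)^2)*Complex.I_sq
  · intro ρ
    have hrho := Matrix.matrix_eq_sum_single ρ
    have hNρ : N ρ = ∑ i : Fin 2, ∑ j : Fin 2, ρ i j • N (Matrix.single i j 1) := by
      calc N ρ = N (∑ i : Fin 2, ∑ j : Fin 2, Matrix.single i j (ρ i j)) := by
            rw [← hrho]
        _ = ∑ i : Fin 2, ∑ j : Fin 2, ρ i j • N (Matrix.single i j 1) := by
            rw [_root_.map_sum]
            refine Finset.sum_congr rfl fun i _ => ?_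
            rw [_root_.map_sum]
            refine Finset.sum_congr rfl fun j _ => ?_
            rw [stdB_smul, _root_.map_smul]
    show N ρ = _
    ext k l
    have e00 := hJpq (0,k) (0,l)
    have e01 := hJpq (0,k) (1,l)
    have e10 := hJpq (1,k) (0,l)
    have e11 := hJpq (1,k) (1,l)
    simp only [Fin.sum_univ_four] at e00 e01 e10 e11
    rw [hNρ]
    fin_cases k <;> fin_cases l <;>
      (simp only [Fin.mk_zero, Fin.mk_one] at e00 e01 e10 e11 ⊢
       simp only [hW00, hW01, hW10, hW11] at e00 e01 e10 e11
       simp only [Prod.mk_zero_zero, Prod.mk_one_one, _root_.map_add, _root_.map_mul,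
         _root_.map_sub, Complex.conj_ofReal, Complex.conj_I] at e00 e01 e10 e11
       simp [Matrix.sum_apply, Matrix.smul_apply, Matrix.mul_apply, Matrix.vecMul,
         dotProduct, Matrix.mulVec, Matrix.conjTranspose_apply, Fin.sum_univ_two,
         Fin.sum_univ_four, hE, smul_eq_mul, Complex.ofReal_div, Complex.star_def,
         _root_.map_add, _root_.map_mul, _root_.map_sub, Complex.conj_ofReal, Complex.conj_I]
       linear_combination (ρ 0 0)/4 * e00 + (ρ 0 1)/4 * e01 + (ρ 1 0)/4 * e10 + (ρ 1 1)/4 * e11)
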